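/- Fix an integer Q ≥ 1, an integer N ≥ 1, a subset 𝒳 ⊆ ℂ, and nonnegative integers P_1,…,P_N, D_0, D_1,…,D_N and K_s ≥ Q+1. For n = 1,…,N let P_n ∈ 𝒳^{P_n×Q}, D_0 ∈ 𝒳^{D_0×Q}, D_n ∈ 𝒳^{D_n×Q}, set X_n = [P_n 1_{P_n}; D_0 1_{D_0}; D_n 1_{D_n}] ∈ ℂ^{(P_n+D_0+D_n)×(Q+1)} (vertical block concatenation, last column all ones), let A_n ∈ ℂ^{(Q+1)×K_s}, and set Y_n = X_n A_n; assume rank(X_n) = rank(A_n) = Q+1 for all n. Suppose that for each n we are given another factorization Y_n = T_n V_n with rank(T_n) = rank(V_n) = Q+1, where T_n = [P_n 1_{P_n}; U_0 1_{D_0}; U_n 1_{D_n}] for some U_0 ∈ 𝒳^{D_0×Q} and U_n ∈ 𝒳^{D_n×Q}, and V_n ∈ ℂ^{(Q+1)×K_s}. Let P = [P_1; …; P_N] ∈ ℂ^{P×Q} with P = P_1+⋯+P_N. If (a) rank([P 1_P]) = Q+1, and (b) there exists m ∈ {1,…,N} such that for every n ∈ {1,…,N}, (null([P_n 1_{P_n}])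 + null([P_m 1_{P_m}])) ∩ null([D_0 1_{D_0}]) = {0} (sum and intersection of subspaces of ℂ^{Q+1}), then T_n = X_n and V_n = A_n for every n; in particular U_0 = D_0 and U_n = D_n for every n. -/

import Mathlib

open Matrix

/-- Horizontal augmentation of a matrix with an all-ones column: `[M 1]`. -/
def augOnes {m : Type*} {Q : ℕ} (M : Matrix m (Fin Q) ℂ) :
    Matrix m (Fin Q ⊕ Fin 1) ℂ :=
  Matrix.fromCols M (Matrix.of fun _ _ => (1 : ℂ))

/-- The structured symbol matrix `[P_n 1; D_0 1; D_n 1]` of the encoding rule. -/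
def symbolMatrix {Q Pn D0 Dn : ℕ}
    (P : Matrix (Fin Pn) (Fin Q) ℂ)
    (D0mat : Matrix (Fin D0) (Fin Q) ℂ)
    (Dmat : Matrix (Fin Dn) (Fin Q) ℂ) :
    Matrix (Fin Pn ⊕ (Fin D0 ⊕ Fin Dn)) (Fin Q ⊕ Fin 1) ℂ :=
  Matrix.fromRows (augOnes P) (Matrix.fromRows (augOnes D0mat) (augOnes Dmat))

/-- The vertical stack `P = [P_1; …; P_N]` of the per-subchannel pilot matrices. -/
def pilotStack {Q N : ℕ} (Psz : Fin N → ℕ)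
    (Pmat : ∀ n : Fin N, Matrix (Fin (Psz n)) (Fin Q) ℂ) :
    Matrix ((n : Fin N) × Fin (Psz n)) (Fin Q) ℂ :=
  Matrix.of fun i j => Pmat i.1 i.2 j

/-- A matrix with `Q+1` columns and rank `Q+1` has trivial kernel. -/
lemma ker_eq_bot_of_rank_aux {m : Type*} [Fintype m] {Q : ℕ}
    (M : Matrix m (Fin Q ⊕ Fin 1) ℂ) (h : M.rank = Q + 1) :
    LinearMap.ker M.mulVecLin = ⊥ := by
  have hsum := LinearMap.finrank_range_add_finrank_ker M.mulVecLin
  have hdom : Module.finrank ℂ ((Fin Q ⊕ Fin 1) → ℂ) = Q + 1 := by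
    simp [Module.finrank_fintype_fun_eq_card]
  rw [hdom] at hsum
  have hr : Module.finrank ℂ (LinearMap.range M.mulVecLin) = Q + 1 := h
  rw [hr] at hsum
  have : Module.finrank ℂ (LinearMap.ker M.mulVecLin) = 0 := by omega
  exact Submodule.finrank_eq_zero.mp this

/-- A matrix with `Q+1` rows and rank `Q+1` has a right inverse. -/
lemma exists_right_inverse_of_rank {Ks Q : ℕ}
    (V : Matrix (Fin Q ⊕ Fin 1) (Fin Ks) ℂ) (h : V.rank = Q + 1) :
    ∃ W : Matrix (Fin Ks) (Fin Q ⊕ Fin 1) ℂ, V * W = 1 := by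
  have htop : LinearMap.range V.mulVecLin = ⊤ := by
    apply Submodule.eq_top_of_finrank_eq
    have : Module.finrank ℂ ((Fin Q ⊕ Fin 1) → ℂ) = Q + 1 := by
      simp [Module.finrank_fintype_fun_eq_card]
    rw [this]; exact h
  have hsurj : Function.Surjective V.mulVecLin :=
    LinearMap.range_eq_top.mp htop
  choose w hw using fun j : Fin Q ⊕ Fin 1 => hsurj (Pi.single j 1)
  refine ⟨Matrix.of fun i j => w j i, ?_⟩
  ext r j
  have := congrFun (hw j) r
  simp only [Matrix.mulVecLin_apply] at this
  simpa [Matrix.mul_apply, Matrix.mulVec, dotProduct, Matrix.one_apply,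
    Pi.single_apply, eq_comm] using this

/-- Each column of `B` lies in the kernel when `M * B = 0`. -/
lemma col_mem_ker {m p : Type*} {Q : ℕ} (M : Matrix m (Fin Q ⊕ Fin 1) ℂ)
    (B : Matrix (Fin Q ⊕ Fin 1) p ℂ) (h : M * B = 0) (j : p) :
    (fun i => B i j) ∈ LinearMap.ker M.mulVecLin := by
  rw [LinearMap.mem_ker]
  funext r
  have := congrFun (congrFun h r) j
  simpa [Matrix.mul_apply, Matrix.mulVec, dotProduct] using this

/-- Left cancellation for a matrix with trivial kernel. -/
lemma mul_left_cancel_of_ker {m p : Type*} {Q : ℕ}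
    (M : Matrix m (Fin Q ⊕ Fin 1) ℂ)
    (hk : LinearMap.ker M.mulVecLin = ⊥)
    {B C : Matrix (Fin Q ⊕ Fin 1) p ℂ} (h : M * B = M * C) : B = C := by
  have h0 : M * (B - C) = 0 := by rw [Matrix.mul_sub, h, sub_self]
  ext i j
  have hc := col_mem_ker M (B - C) h0 j
  rw [hk, Submodule.mem_bot] at hc
  have := congrFun hc i
  simpa [sub_eq_zero] using this

lemma augOnes_inj {m : Type*} {Q : ℕ} {M N : Matrix m (Fin Q) ℂ}
    (h : augOnes M = augOnes N) : M = N := by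
  ext i j
  have := congrFun (congrFun h i) (Sum.inl j)
  simpa [augOnes, Matrix.fromCols] using this

theorem noiseless_unique_recovery
    (Q N Ks D0sz : ℕ) (hQ : 1 ≤ Q) (hN : 1 ≤ N) (hKs : Q + 1 ≤ Ks)
    (𝒳 : Set ℂ)
    (Psz Dsz : Fin N → ℕ)
    (Pmat : ∀ n : Fin N, Matrix (Fin (Psz n)) (Fin Q) ℂ)
    (D0mat : Matrix (Fin D0sz) (Fin Q) ℂ)
    (Dmat : ∀ n : Fin N, Matrix (Fin (Dsz n)) (Fin Q) ℂ)
    (hPX : ∀ n i j, Pmat n i j ∈ 𝒳)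
    (hD0X : ∀ i j, D0mat i j ∈ 𝒳)
    (hDX : ∀ n i j, Dmat n i j ∈ 𝒳)
    (A : ∀ n : Fin N, Matrix (Fin Q ⊕ Fin 1) (Fin Ks) ℂ)
    (hrankX : ∀ n : Fin N, (symbolMatrix (Pmat n) D0mat (Dmat n)).rank = Q + 1)
    (hrankA : ∀ n : Fin N, (A n).rank = Q + 1)
    (U0 : Matrix (Fin D0sz) (Fin Q) ℂ)
    (Un : ∀ n : Fin N, Matrix (Fin (Dsz n)) (Fin Q) ℂ)
    (hU0X : ∀ i j, U0 i j ∈ 𝒳)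
    (hUnX : ∀ n i j, Un n i j ∈ 𝒳)
    (V : ∀ n : Fin N, Matrix (Fin Q ⊕ Fin 1) (Fin Ks) ℂ)
    (hrankT : ∀ n : Fin N, (symbolMatrix (Pmat n) U0 (Un n)).rank = Q + 1)
    (hrankV : ∀ n : Fin N, (V n).rank = Q + 1)
    (hfact : ∀ n : Fin N,
      symbolMatrix (Pmat n) D0mat (Dmat n) * A n =
        symbolMatrix (Pmat n) U0 (Un n) * V n)
    (ha : (augOnes (pilotStack Psz Pmat)).rank = Q + 1)
    (hb : ∃ m : Fin N, ∀ n : Fin N,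
      (LinearMap.ker (augOnes (Pmat n)).mulVecLin ⊔
        LinearMap.ker (augOnes (Pmat m)).mulVecLin) ⊓
        LinearMap.ker (augOnes D0mat).mulVecLin = ⊥) :
    (∀ n : Fin N, symbolMatrix (Pmat n) U0 (Un n) = symbolMatrix (Pmat n) D0mat (Dmat n)) ∧
    (∀ n : Fin N, V n = A n) ∧
    U0 = D0mat ∧ (∀ n : Fin N, Un n = Dmat n) := by
  obtain ⟨m, hbm⟩ := hb
  -- right inverses of the V n
  choose W hW using fun n => exists_right_inverse_of_rank (V n) (hrankV n)
  set G : Fin N → Matrix (Fin Q ⊕ Fin 1) (Fin Q ⊕ Fin 1) ℂ := fun n => A n * W n with hG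
  -- T_n = X_n * G_n
  have hXkills : ∀ n, LinearMap.ker (symbolMatrix (Pmat n) D0mat (Dmat n)).mulVecLin = ⊥ :=
    fun n => ker_eq_bot_of_rank_aux _ (hrankX n)
  have h1 : ∀ n, symbolMatrix (Pmat n) U0 (Un n) =
      symbolMatrix (Pmat n) D0mat (Dmat n) * G n := by
    intro n
    calc symbolMatrix (Pmat n) U0 (Un n)
        = symbolMatrix (Pmat n) U0 (Un n) * (V n * W n) := by rw [hW n, Matrix.mul_one]
      _ = (symbolMatrix (Pmat n) U0 (Un n) * V n) * W n := by rw [Matrix.mul_assoc]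
      _ = (symbolMatrix (Pmat n) D0mat (Dmat n) * A n) * W n := by rw [hfact n]
      _ = symbolMatrix (Pmat n) D0mat (Dmat n) * G n := by rw [Matrix.mul_assoc]
  -- A_n = G_n * V_n
  have h2 : ∀ n, A n = G n * V n := by
    intro n
    apply mul_left_cancel_of_ker _ (hXkills n)
    rw [← Matrix.mul_assoc, ← h1 n, hfact n]
  -- block equalities from h1
  have hblkP : ∀ n, augOnes (Pmat n) = augOnes (Pmat n) * G n := by
    intro n
    have := h1 n
    simp only [symbolMatrix, Matrix.fromRows_mul] at this
    exact congrArg (fun M => fun i j => M (Sum.inl i) j) this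
  have hblkU0 : ∀ n, augOnes U0 = augOnes D0mat * G n := by
    intro n
    have := h1 n
    simp only [symbolMatrix, Matrix.fromRows_mul] at this
    exact congrArg (fun M => fun i j => M (Sum.inr (Sum.inl i)) j) this
  have hblkUn : ∀ n, augOnes (Un n) = augOnes (Dmat n) * G n := by
    intro n
    have := h1 n
    simp only [symbolMatrix, Matrix.fromRows_mul] at this
    exact congrArg (fun M => fun i j => M (Sum.inr (Sum.inr i)) j) this
  -- columns of G n - 1 lie in ker [P_n 1]
  have hcolP : ∀ n (j : Fin Q ⊕ Fin 1),
      (fun i => (G n - 1) i j) ∈ LinearMap.ker (augOnes (Pmat n)).mulVecLin := by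
    intro n j
    apply col_mem_ker
    rw [Matrix.mul_sub, Matrix.mul_one, ← hblkP n, sub_self]
  -- G n = G m for all n
  have hGeq : ∀ n, G n = G m := by
    intro n
    have h0 : augOnes D0mat * (G n - G m) = 0 := by
      rw [Matrix.mul_sub, ← hblkU0 n, ← hblkU0 m, sub_self]
    ext i j
    have hd : (fun i => (G n - G m) i j) ∈ LinearMap.ker (augOnes D0mat).mulVecLin :=
      col_mem_ker _ _ h0 j
    have hsup : (fun i => (G n - G m) i j) ∈
        LinearMap.ker (augOnes (Pmat n)).mulVecLin ⊔
          LinearMap.ker (augOnes (Pmat m)).mulVecLin := by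
      have hdecomp : (fun i => (G n - G m) i j) =
          (fun i => (G n - 1) i j) + (fun i => -((G m - 1) i j)) := by
        funext i
        simp only [Matrix.sub_apply, Pi.add_apply, Pi.neg_apply]
        ring
      rw [hdecomp]
      exact Submodule.add_mem_sup (hcolP n j)
        (Submodule.neg_mem _ (hcolP m j))
    have : (fun i => (G n - G m) i j) ∈
        (LinearMap.ker (augOnes (Pmat n)).mulVecLin ⊔
          LinearMap.ker (augOnes (Pmat m)).mulVecLin) ⊓
          LinearMap.ker (augOnes D0mat).mulVecLin := ⟨hsup, hd⟩
    rw [hbm n, Submodule.mem_bot] at this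
    have := congrFun this i
    simpa [sub_eq_zero] using this
  -- G m = 1 from the stacked pilot condition (a)
  have hstackker : LinearMap.ker (augOnes (pilotStack Psz Pmat)).mulVecLin = ⊥ :=
    ker_eq_bot_of_rank_aux _ ha
  have hGm1 : G m = 1 := by
    ext i j
    have hcol : (fun i => (G m - 1) i j) ∈
        LinearMap.ker (augOnes (pilotStack Psz Pmat)).mulVecLin := by
      rw [LinearMap.mem_ker]
      funext r
      have hn := hcolP r.1 j
      rw [hGeq r.1, LinearMap.mem_ker] at hn
      have := congrFun hn r.2
      simpa [Matrix.mulVecLin_apply, Matrix.mulVec, dotProduct, augOnes,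
        Matrix.fromCols, pilotStack] using this
    rw [hstackker, Submodule.mem_bot] at hcol
    have := congrFun hcol i
    simpa [sub_eq_zero] using this
  have hG1 : ∀ n, G n = 1 := fun n => (hGeq n).trans hGm1
  -- conclude
  have hT : ∀ n, symbolMatrix (Pmat n) U0 (Un n) = symbolMatrix (Pmat n) D0mat (Dmat n) := by
    intro n; rw [h1 n, hG1 n, Matrix.mul_one]
  have hV : ∀ n, V n = A n := by
    intro n; rw [h2 n, hG1 n, Matrix.one_mul]
  refine ⟨hT, hV, ?_, ?_⟩
  · apply augOnes_inj
    rw [hblkU0 m, hG1 m, Matrix.mul_one]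
  · intro n
    apply augOnes_inj
    rw [hblkUn n, hG1 n, Matrix.mul_one]
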